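/- For each x in a finite question set 𝒳 let A^x = {A^x_a} be a submeasurement with answer set 𝒜, on a space with tracial state τ. Suppose that on average over independent uniform x,y ∈ 𝒳, E_{x,y} Σ_{a,b} ‖A^x_a A^y_b − A^y_b A^x_a‖_τ² ≤ ε². For a sequence s ∈ 𝒳^k and ā ∈ 𝒜^k define P^s_{ā} = A^{s₁}_{a₁} ⋯ A^{s_k}_{a_k}. Then for every k ≥ 1, E_{s∼𝒳^k, x∼𝒳} Σ_{ā,b} ‖P^s_{ā} A^x_b − A^x_b P^s_{ā}‖_τ² ≤ (kε)². -/

import Mathlib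

open scoped Matrix ComplexOrder BigOperators

/-- The normalized trace (the unique tracial state on n×n complex matrices). -/
noncomputable def tau {n : ℕ} (A : Matrix (Fin n) (Fin n) ℂ) : ℂ := A.trace / (n : ℂ)

/-- The squared τ-norm, `‖A‖_τ² = τ(A*A)` (a real number). -/
noncomputable def tauNormSq {n : ℕ} (A : Matrix (Fin n) (Fin n) ℂ) : ℝ := (tau (Aᴴ * A)).re

/-- A submeasurement: a family of positive semidefinite operators with sum at most the identity. -/
def IsSubmeasurement {n : ℕ} {α : Type*} [Fintype α]
    (M : α → Matrix (Fin n) (Fin n) ℂ) : Prop :=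
  (∀ a, (M a).PosSemidef) ∧ (1 - ∑ a, M a).PosSemidef

/-- A measurement: a family of positive semidefinite operators summing to the identity. -/
def IsMeasurement {n : ℕ} {α : Type*} [Fintype α]
    (M : α → Matrix (Fin n) (Fin n) ℂ) : Prop :=
  (∀ a, (M a).PosSemidef) ∧ (∑ a, M a) = 1

/-- A projective submeasurement: a family of orthogonal projections with sum at most the identity. -/
def IsProjectiveSubmeasurement {n : ℕ} {α : Type*} [Fintype α]
    (M : α → Matrix (Fin n) (Fin n) ℂ) : Prop :=
  (∀ a, (M a).IsHermitian ∧ M a * M a = M a) ∧ (1 - ∑ a, M a).PosSemidef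


open Matrix

section SwitcherooAux

set_option linter.unusedSectionVars false

attribute [local instance] Matrix.frobeniusNormedAddCommGroup

variable {n : ℕ}

open scoped MatrixOrder in
private lemma sw_trace_re_nonneg {A : Matrix (Fin n) (Fin n) ℂ} (hA : A.PosSemidef) :
    0 ≤ A.trace.re := by
  obtain ⟨B, rfl⟩ : ∃ B : Matrix (Fin n) (Fin n) ℂ, A = Bᴴ * B :=
    ⟨CFC.sqrt A, by
      rw [(CFC.sqrt_nonneg A).posSemidef.isHermitian.eq, CFC.sqrt_mul_sqrt_self A hA.nonneg]⟩
  rw [Matrix.trace]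
  simp only [Matrix.diag, Matrix.mul_apply, Matrix.conjTranspose_apply, Complex.re_sum,
    Complex.star_def, Complex.mul_re, Complex.conj_re, Complex.conj_im, neg_mul, sub_neg_eq_add]
  exact Finset.sum_nonneg fun j _ => Finset.sum_nonneg fun i _ =>
    add_nonneg (mul_self_nonneg _) (mul_self_nonneg _)

private lemma sw_tauNormSq_eq_trace (A : Matrix (Fin n) (Fin n) ℂ) :
    tauNormSq A = ((Aᴴ * A).trace).re / n := by
  unfold tauNormSq tau
  rw [div_eq_mul_inv, div_eq_mul_inv,
    show ((n:ℂ))⁻¹ = ((n:ℝ)⁻¹ : ℝ) by push_cast; ring, Complex.mul_re]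
  simp

private lemma sw_trace_form (A : Matrix (Fin n) (Fin n) ℂ) :
    ((Aᴴ * A).trace).re = ‖A‖ ^ 2 := by
  rw [Matrix.frobenius_norm_def, ← Real.rpow_natCast _ 2, ← Real.rpow_mul (by positivity)]
  rw [Matrix.trace]
  simp only [Matrix.diag, Matrix.mul_apply, Matrix.conjTranspose_apply, Complex.re_sum]
  rw [Finset.sum_comm]
  norm_num
  congr 1
  ext i
  congr 1
  ext j
  simp [Complex.sq_norm, Complex.normSq_apply]

private lemma sw_tauNormSq_eq_norm (A : Matrix (Fin n) (Fin n) ℂ) :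
    tauNormSq A = ‖A‖ ^ 2 / n := by
  rw [sw_tauNormSq_eq_trace, sw_trace_form]

private lemma sw_tauNormSq_nonneg (A : Matrix (Fin n) (Fin n) ℂ) : 0 ≤ tauNormSq A := by
  rw [sw_tauNormSq_eq_norm]; positivity

private lemma sw_sqrt_tauNormSq (A : Matrix (Fin n) (Fin n) ℂ) :
    Real.sqrt (tauNormSq A) = ‖A‖ / Real.sqrt n := by
  rw [sw_tauNormSq_eq_norm, Real.sqrt_div (by positivity), Real.sqrt_sq (norm_nonneg A)]

private lemma sw_nu_triangle (A B : Matrix (Fin n) (Fin n) ℂ) :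
    Real.sqrt (tauNormSq (A + B)) ≤ Real.sqrt (tauNormSq A) + Real.sqrt (tauNormSq B) := by
  rw [sw_sqrt_tauNormSq, sw_sqrt_tauNormSq, sw_sqrt_tauNormSq, ← add_div]
  gcongr
  exact norm_add_le A B

private lemma sw_psd_sum {ι : Type*} (s : Finset ι) (f : ι → Matrix (Fin n) (Fin n) ℂ)
    (h : ∀ i ∈ s, (f i).PosSemidef) : (∑ i ∈ s, f i).PosSemidef := by
  induction s using Finset.cons_induction with
  | empty => simpa using Matrix.PosSemidef.zero
  | cons a s ha ih =>
      rw [Finset.sum_cons]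
      exact (h a (Finset.mem_cons_self a s)).add (ih fun i hi => h i (Finset.mem_cons_of_mem hi))

open scoped MatrixOrder in
private lemma sw_psd_sub_sq {P : Matrix (Fin n) (Fin n) ℂ} (h1 : P.PosSemidef)
    (h2 : (1 - P).PosSemidef) : (P - P * P).PosSemidef := by
  have hs := (CFC.sqrt_nonneg P).posSemidef
  have hS : CFC.sqrt P * P * CFC.sqrt P = P * P := by
    have h' := CFC.sqrt_mul_sqrt_self P h1.nonneg
    generalize CFC.sqrt P = S at h' ⊢
    rw [← h', ← mul_assoc, mul_assoc (S * S)]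
  have key : P - P * P = (CFC.sqrt P)ᴴ * (1 - P) * CFC.sqrt P := by
    rw [hs.isHermitian.eq, mul_sub, sub_mul, mul_one, CFC.sqrt_mul_sqrt_self P h1.nonneg, hS]
  rw [key]
  exact h2.conjTranspose_mul_mul_same _

variable {X α : Type*} [Fintype X] [Fintype α] [DecidableEq α]

private lemma sw_sub_le_one {M : α → Matrix (Fin n) (Fin n) ℂ} (hM : IsSubmeasurement M)
    (a : α) : (1 - M a).PosSemidef := by
  have : (1:Matrix (Fin n) (Fin n) ℂ) - M a
      = (1 - ∑ c, M c) + ∑ c ∈ Finset.univ.erase a, M c := by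
    rw [← Finset.add_sum_erase _ _ (Finset.mem_univ a)]
    abel
  rw [this]
  exact hM.2.add (sw_psd_sum _ _ fun c _ => hM.1 c)

private lemma sw_sum_sq_le_one {M : α → Matrix (Fin n) (Fin n) ℂ} (hM : IsSubmeasurement M) :
    (1 - ∑ a, M a * M a).PosSemidef := by
  have : (1:Matrix (Fin n) (Fin n) ℂ) - ∑ a, M a * M a
      = (1 - ∑ a, M a) + ∑ a, (M a - M a * M a) := by
    rw [Finset.sum_sub_distrib]; abel
  rw [this]
  exact hM.2.add (sw_psd_sum _ _ fun a _ => sw_psd_sub_sq (hM.1 a) (sw_sub_le_one hM a))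

private lemma sw_trace_re_mono_left {P Q : Matrix (Fin n) (Fin n) ℂ} (h : (Q - P).PosSemidef)
    (B : Matrix (Fin n) (Fin n) ℂ) :
    ((Bᴴ * P * B).trace).re ≤ ((Bᴴ * Q * B).trace).re := by
  have h0 := sw_trace_re_nonneg (h.conjTranspose_mul_mul_same B)
  have : Bᴴ * (Q - P) * B = Bᴴ * Q * B - Bᴴ * P * B := by
    rw [mul_sub, sub_mul]
  rw [this, Matrix.trace_sub, Complex.sub_re] at h0
  linarith

private lemma sw_trace_re_mono_right {P Q : Matrix (Fin n) (Fin n) ℂ} (h : (Q - P).PosSemidef)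
    (B : Matrix (Fin n) (Fin n) ℂ) :
    ((B * P * Bᴴ).trace).re ≤ ((B * Q * Bᴴ).trace).re := by
  have h0 := sw_trace_re_nonneg (h.mul_mul_conjTranspose_same B)
  have : B * (Q - P) * Bᴴ = B * Q * Bᴴ - B * P * Bᴴ := by
    rw [mul_sub, sub_mul]
  rw [this, Matrix.trace_sub, Complex.sub_re] at h0
  linarith

private lemma sw_sum_pi_succ {β M : Type*} [Fintype β] [AddCommMonoid M] {k : ℕ}
    (f : (Fin (k+1) → β) → M) :
    ∑ a : Fin (k+1) → β, f a = ∑ a₀ : β, ∑ a' : Fin k → β, f (Fin.cons a₀ a') := by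
  rw [← Equiv.sum_comp (Fin.consEquiv fun _ => β) f, Fintype.sum_prod_type]
  rfl

private noncomputable def Pmat (A : X → α → Matrix (Fin n) (Fin n) ℂ) {k : ℕ}
    (s : Fin k → X) (a : Fin k → α) : Matrix (Fin n) (Fin n) ℂ :=
  (List.ofFn fun i => A (s i) (a i)).prod

private lemma Pmat_succ (A : X → α → Matrix (Fin n) (Fin n) ℂ) {k : ℕ}
    (s : Fin (k+1) → X) (a : Fin (k+1) → α) :
    Pmat A s a = A (s 0) (a 0) * Pmat A (fun i => s i.succ) (fun i => a i.succ) := by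
  rw [Pmat, List.ofFn_succ, List.prod_cons]; rfl

private lemma Pmat_cons (A : X → α → Matrix (Fin n) (Fin n) ℂ) {k : ℕ}
    (s₀ : X) (s : Fin k → X) (a₀ : α) (a : Fin k → α) :
    Pmat A (Fin.cons s₀ s) (Fin.cons a₀ a) = A s₀ a₀ * Pmat A s a := by
  rw [Pmat_succ]
  simp [Fin.cons_succ]

private lemma sw_Q_le_one (A : X → α → Matrix (Fin n) (Fin n) ℂ)
    (hA : ∀ x, IsSubmeasurement (A x)) :
    ∀ {k : ℕ} (s : Fin k → X),
      (1 - ∑ a : Fin k → α, Pmat A s a * (Pmat A s a)ᴴ).PosSemidef := by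
  intro k
  induction k with
  | zero =>
      intro s
      have : ∑ a : Fin 0 → α, Pmat A s a * (Pmat A s a)ᴴ = 1 := by
        rw [Fintype.sum_unique]
        simp [Pmat]
      rw [this, sub_self]
      exact Matrix.PosSemidef.zero
  | succ k ih =>
      intro s
      have hsum : ∑ a : Fin (k+1) → α, Pmat A s a * (Pmat A s a)ᴴ
          = ∑ a₀ : α, A (s 0) a₀ *
              (∑ a' : Fin k → α, Pmat A (fun i => s i.succ) a' * (Pmat A (fun i => s i.succ) a')ᴴ)
              * A (s 0) a₀ := by
        rw [sw_sum_pi_succ]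
        refine Finset.sum_congr rfl fun a₀ _ => ?_
        rw [Finset.mul_sum, Finset.sum_mul]
        refine Finset.sum_congr rfl fun a' _ => ?_
        rw [Pmat_succ]
        have ha : (Fin.cons a₀ a' : Fin (k+1) → α) 0 = a₀ := rfl
        have ha' : (fun i : Fin k => (Fin.cons a₀ a' : Fin (k+1) → α) i.succ) = a' := by
          funext i; simp [Fin.cons_succ]
        rw [ha, ha', Matrix.conjTranspose_mul, ((hA (s 0)).1 a₀).isHermitian.eq]
        noncomm_ring
      rw [hsum]
      set Q := ∑ a' : Fin k → α,
        Pmat A (fun i => s i.succ) a' * (Pmat A (fun i => s i.succ) a')ᴴ with hQ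
      have key : (1 : Matrix (Fin n) (Fin n) ℂ) - ∑ a₀ : α, A (s 0) a₀ * Q * A (s 0) a₀
          = (1 - ∑ a₀ : α, A (s 0) a₀ * A (s 0) a₀)
            + ∑ a₀ : α, A (s 0) a₀ * (1 - Q) * A (s 0) a₀ := by
        simp only [mul_sub, sub_mul, mul_one]
        rw [Finset.sum_sub_distrib]
        abel
      rw [key]
      refine (sw_sum_sq_le_one (hA (s 0))).add (sw_psd_sum _ _ fun a₀ _ => ?_)
      have := (ih (fun i => s i.succ)).conjTranspose_mul_mul_same (A (s 0) a₀)
      rwa [((hA (s 0)).1 a₀).isHermitian.eq] at this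

private lemma sw_head_contract {B : α → Matrix (Fin n) (Fin n) ℂ} (hB : IsSubmeasurement B)
    (M : Matrix (Fin n) (Fin n) ℂ) :
    ∑ a, tauNormSq (B a * M) ≤ tauNormSq M := by
  have e : ∀ a, tauNormSq (B a * M) = ((Mᴴ * (B a * B a) * M).trace).re / n := by
    intro a
    rw [sw_tauNormSq_eq_trace]
    congr 2
    rw [Matrix.conjTranspose_mul, (hB.1 a).isHermitian.eq]
    noncomm_ring
  calc ∑ a, tauNormSq (B a * M)
      = (∑ a, ((Mᴴ * (B a * B a) * M).trace).re) / n := by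
        simp only [e]; rw [Finset.sum_div]
    _ = ((Mᴴ * (∑ a, B a * B a) * M).trace).re / n := by
        rw [Finset.mul_sum, Finset.sum_mul, Matrix.trace_sum, Complex.re_sum]
    _ ≤ ((Mᴴ * 1 * M).trace).re / n := by
        rw [div_eq_mul_inv, div_eq_mul_inv]
        exact mul_le_mul_of_nonneg_right (sw_trace_re_mono_left (sw_sum_sq_le_one hB) M)
          (inv_nonneg.mpr (Nat.cast_nonneg n))
    _ = tauNormSq M := by rw [sw_tauNormSq_eq_trace, mul_one]

private lemma sw_tail_contract (A : X → α → Matrix (Fin n) (Fin n) ℂ)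
    (hA : ∀ x, IsSubmeasurement (A x))
    (C : Matrix (Fin n) (Fin n) ℂ) {k : ℕ} (s : Fin k → X) :
    ∑ a : Fin k → α, tauNormSq (C * Pmat A s a) ≤ tauNormSq C := by
  have e : ∀ a : Fin k → α, tauNormSq (C * Pmat A s a)
      = ((C * (Pmat A s a * (Pmat A s a)ᴴ) * Cᴴ).trace).re / n := by
    intro a
    rw [sw_tauNormSq_eq_trace]
    congr 1
    rw [Matrix.conjTranspose_mul, Matrix.trace_mul_comm]
    congr 1
    noncomm_ring
  calc ∑ a : Fin k → α, tauNormSq (C * Pmat A s a)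
      = (∑ a : Fin k → α, ((C * (Pmat A s a * (Pmat A s a)ᴴ) * Cᴴ).trace).re) / n := by
        simp only [e]; rw [Finset.sum_div]
    _ = ((C * (∑ a : Fin k → α, Pmat A s a * (Pmat A s a)ᴴ) * Cᴴ).trace).re / n := by
        rw [Finset.mul_sum, Finset.sum_mul, Matrix.trace_sum, Complex.re_sum]
    _ ≤ ((C * 1 * Cᴴ).trace).re / n := by
        rw [div_eq_mul_inv, div_eq_mul_inv]
        exact mul_le_mul_of_nonneg_right (sw_trace_re_mono_right (sw_Q_le_one A hA s) C)
          (inv_nonneg.mpr (Nat.cast_nonneg n))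
    _ = tauNormSq C := by rw [sw_tauNormSq_eq_trace, mul_one, Matrix.trace_mul_comm]

private lemma sw_minkowski_sum {ι : Type*} [Fintype ι] (f u v : ι → ℝ) (hu : ∀ i, 0 ≤ u i)
    (hv : ∀ i, 0 ≤ v i) (hf : ∀ i, f i ≤ (Real.sqrt (u i) + Real.sqrt (v i)) ^ 2) :
    ∑ i, f i ≤ (Real.sqrt (∑ i, u i) + Real.sqrt (∑ i, v i)) ^ 2 := by
  have key : ∑ i, Real.sqrt (u i) * Real.sqrt (v i)
      ≤ Real.sqrt (∑ i, u i) * Real.sqrt (∑ i, v i) :=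
    Real.sum_sqrt_mul_sqrt_le _ hu hv
  calc ∑ i, f i ≤ ∑ i, (Real.sqrt (u i) + Real.sqrt (v i)) ^ 2 :=
        Finset.sum_le_sum fun i _ => hf i
    _ = ∑ i, (u i + v i + 2 * (Real.sqrt (u i) * Real.sqrt (v i))) := by
        refine Finset.sum_congr rfl fun i _ => ?_
        rw [add_sq, Real.sq_sqrt (hu i), Real.sq_sqrt (hv i)]
        ring
    _ = (∑ i, u i) + (∑ i, v i) + 2 * ∑ i, Real.sqrt (u i) * Real.sqrt (v i) := by
        rw [Finset.sum_add_distrib, Finset.sum_add_distrib, ← Finset.mul_sum]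
    _ ≤ (∑ i, u i) + (∑ i, v i) + 2 * (Real.sqrt (∑ i, u i) * Real.sqrt (∑ i, v i)) := by
        linarith
    _ = (Real.sqrt (∑ i, u i) + Real.sqrt (∑ i, v i)) ^ 2 := by
        rw [add_sq, Real.sq_sqrt (Finset.sum_nonneg fun i _ => hu i),
          Real.sq_sqrt (Finset.sum_nonneg fun i _ => hv i)]
        ring

private noncomputable def SkSum (A : X → α → Matrix (Fin n) (Fin n) ℂ) (k : ℕ) : ℝ :=
  ∑ s : Fin k → X, ∑ x, ∑ a : Fin k → α, ∑ b,
    tauNormSq (Pmat A s a * A x b - A x b * Pmat A s a)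

private noncomputable def ESum (A : X → α → Matrix (Fin n) (Fin n) ℂ) : ℝ :=
  ∑ x, ∑ y, ∑ a, ∑ b, tauNormSq (A x a * A y b - A y b * A x a)

set_option maxHeartbeats 1000000 in
private lemma sw_step_lemma (A : X → α → Matrix (Fin n) (Fin n) ℂ)
    (hA : ∀ x, IsSubmeasurement (A x)) (k : ℕ) :
    SkSum A (k+1) ≤ (Real.sqrt ((Fintype.card X : ℝ) * SkSum A k)
      + Real.sqrt ((Fintype.card X : ℝ) ^ k * ESum A)) ^ 2 := by
  classical
  set Mm : (Fin k → X) → X → (Fin k → α) → α → Matrix (Fin n) (Fin n) ℂ :=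
    fun s' x a' b => Pmat A s' a' * A x b - A x b * Pmat A s' a' with hMm
  set Cc : X → α → X → α → Matrix (Fin n) (Fin n) ℂ :=
    fun s₀ a₀ x b => A s₀ a₀ * A x b - A x b * A s₀ a₀ with hCc
  set u : X × (Fin k → X) × X × α × (Fin k → α) × α → ℝ :=
    fun p => tauNormSq (A p.1 p.2.2.2.1 * Mm p.2.1 p.2.2.1 p.2.2.2.2.1 p.2.2.2.2.2) with hu_def
  set v : X × (Fin k → X) × X × α × (Fin k → α) × α → ℝ := fun p =>
    tauNormSq (Cc p.1 p.2.2.2.1 p.2.2.1 p.2.2.2.2.2 * Pmat A p.2.1 p.2.2.2.2.1) with hv_def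
  set F : X × (Fin k → X) × X × α × (Fin k → α) × α → ℝ := fun p =>
    tauNormSq (Pmat A (Fin.cons p.1 p.2.1) (Fin.cons p.2.2.2.1 p.2.2.2.2.1) * A p.2.2.1 p.2.2.2.2.2
      - A p.2.2.1 p.2.2.2.2.2 * Pmat A (Fin.cons p.1 p.2.1) (Fin.cons p.2.2.2.1 p.2.2.2.2.1))
    with hF_def
  have hflat : SkSum A (k+1) = ∑ p, F p := by
    rw [SkSum]
    simp [sw_sum_pi_succ, hF_def, Fintype.sum_prod_type]
  have tri : ∀ p, F p ≤ (Real.sqrt (u p) + Real.sqrt (v p)) ^ 2 := by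
    rintro ⟨s₀, s', x, a₀, a', b⟩
    simp only [hF_def, hu_def, hv_def]
    have hdec : Pmat A (Fin.cons s₀ s') (Fin.cons a₀ a') * A x b
        - A x b * Pmat A (Fin.cons s₀ s') (Fin.cons a₀ a')
        = A s₀ a₀ * Mm s' x a' b + Cc s₀ a₀ x b * Pmat A s' a' := by
      rw [Pmat_cons, hMm, hCc]
      noncomm_ring
    rw [hdec]
    have h1 := sw_nu_triangle (A s₀ a₀ * Mm s' x a' b) (Cc s₀ a₀ x b * Pmat A s' a')
    have h2 : tauNormSq (A s₀ a₀ * Mm s' x a' b + Cc s₀ a₀ x b * Pmat A s' a')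
        = (Real.sqrt (tauNormSq (A s₀ a₀ * Mm s' x a' b + Cc s₀ a₀ x b * Pmat A s' a'))) ^ 2 :=
      (Real.sq_sqrt (sw_tauNormSq_nonneg _)).symm
    rw [h2]
    exact pow_le_pow_left₀ (Real.sqrt_nonneg _) h1 2
  have hu : ∑ p, u p ≤ (Fintype.card X : ℝ) * SkSum A k := by
    rw [hu_def]
    rw [Fintype.sum_prod_type]
    simp only [Fintype.sum_prod_type]
    have inner : ∀ (s₀ : X) (s' : Fin k → X) (x : X),
        ∑ a₀ : α, ∑ a' : Fin k → α, ∑ b : α, tauNormSq (A s₀ a₀ * Mm s' x a' b)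
        ≤ ∑ a' : Fin k → α, ∑ b : α, tauNormSq (Mm s' x a' b) := by
      intro s₀ s' x
      rw [Finset.sum_comm]
      refine Finset.sum_le_sum fun a' _ => ?_
      rw [Finset.sum_comm]
      refine Finset.sum_le_sum fun b _ => ?_
      exact sw_head_contract (hA s₀) (Mm s' x a' b)
    calc ∑ s₀ : X, ∑ s' : Fin k → X, ∑ x : X, ∑ a₀ : α, ∑ a' : Fin k → α, ∑ b : α,
          tauNormSq (A s₀ a₀ * Mm s' x a' b)
        ≤ ∑ s₀ : X, ∑ s' : Fin k → X, ∑ x : X, ∑ a' : Fin k → α, ∑ b : α,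
          tauNormSq (Mm s' x a' b) := by
          refine Finset.sum_le_sum fun s₀ _ => Finset.sum_le_sum fun s' _ =>
            Finset.sum_le_sum fun x _ => inner s₀ s' x
      _ = (Fintype.card X : ℝ) * SkSum A k := by
          rw [Finset.sum_const, SkSum]
          simp [nsmul_eq_mul, Finset.card_univ, hMm]
  have hv : ∑ p, v p ≤ (Fintype.card X : ℝ) ^ k * ESum A := by
    rw [hv_def]
    rw [Fintype.sum_prod_type]
    simp only [Fintype.sum_prod_type]
    have inner : ∀ (s₀ : X) (s' : Fin k → X) (x : X) (a₀ : α),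
        ∑ a' : Fin k → α, ∑ b : α, tauNormSq (Cc s₀ a₀ x b * Pmat A s' a')
        ≤ ∑ b : α, tauNormSq (Cc s₀ a₀ x b) := by
      intro s₀ s' x a₀
      rw [Finset.sum_comm]
      refine Finset.sum_le_sum fun b _ => ?_
      exact sw_tail_contract A hA (Cc s₀ a₀ x b) s'
    calc ∑ s₀ : X, ∑ s' : Fin k → X, ∑ x : X, ∑ a₀ : α, ∑ a' : Fin k → α, ∑ b : α,
          tauNormSq (Cc s₀ a₀ x b * Pmat A s' a')
        ≤ ∑ s₀ : X, ∑ s' : Fin k → X, ∑ x : X, ∑ a₀ : α, ∑ b : α,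
          tauNormSq (Cc s₀ a₀ x b) := by
          refine Finset.sum_le_sum fun s₀ _ => Finset.sum_le_sum fun s' _ =>
            Finset.sum_le_sum fun x _ => Finset.sum_le_sum fun a₀ _ => inner s₀ s' x a₀
      _ = (Fintype.card X : ℝ) ^ k * ESum A := by
          simp only [Finset.sum_const, Finset.card_univ, nsmul_eq_mul, ← Finset.mul_sum]
          rw [ESum, hCc]
          rw [Fintype.card_fun, Fintype.card_fin]
          push_cast
          ring
  have mink := sw_minkowski_sum F u v (fun p => sw_tauNormSq_nonneg _)
    (fun p => sw_tauNormSq_nonneg _) tri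
  rw [hflat]
  refine mink.trans ?_
  have l1 : Real.sqrt (∑ p, u p) ≤ Real.sqrt ((Fintype.card X : ℝ) * SkSum A k) :=
    Real.sqrt_le_sqrt hu
  have l2 : Real.sqrt (∑ p, v p) ≤ Real.sqrt ((Fintype.card X : ℝ) ^ k * ESum A) :=
    Real.sqrt_le_sqrt hv
  exact pow_le_pow_left₀ (by positivity) (add_le_add l1 l2) 2

private lemma sw_SkSum_nonneg (A : X → α → Matrix (Fin n) (Fin n) ℂ) (k : ℕ) :
    0 ≤ SkSum A k := by
  refine Finset.sum_nonneg fun _ _ => Finset.sum_nonneg fun _ _ =>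
    Finset.sum_nonneg fun _ _ => Finset.sum_nonneg fun _ _ => sw_tauNormSq_nonneg _

private lemma sw_SkSum_one (A : X → α → Matrix (Fin n) (Fin n) ℂ) : SkSum A 1 = ESum A := by
  rw [SkSum, ESum]
  have e1 : ∀ g : (Fin 1 → X) → ℝ, ∑ s, g s = ∑ y : X, g (fun _ => y) := fun g =>
    (Equiv.sum_comp (Equiv.funUnique (Fin 1) X).symm g).symm
  have e2 : ∀ g : (Fin 1 → α) → ℝ, ∑ s, g s = ∑ y : α, g (fun _ => y) := fun g =>
    (Equiv.sum_comp (Equiv.funUnique (Fin 1) α).symm g).symm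
  rw [e1]
  refine Finset.sum_congr rfl fun y _ => Finset.sum_congr rfl fun x _ => ?_
  rw [e2]
  refine Finset.sum_congr rfl fun a _ => Finset.sum_congr rfl fun b _ => ?_
  congr 2 <;> simp [Pmat]

private theorem switcheroo_aux (A : X → α → Matrix (Fin n) (Fin n) ℂ) [Nonempty X]
    (hA : ∀ x, IsSubmeasurement (A x))
    (ε : ℝ) (hε : 0 ≤ ε)
    (h : (1 / ((Fintype.card X : ℝ)) ^ 2) * ESum A ≤ ε ^ 2)
    (k : ℕ) (hk : 1 ≤ k) :
    (1 / ((Fintype.card X : ℝ)) ^ (k + 1)) * SkSum A k ≤ ((k : ℝ) * ε) ^ 2 := by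
  classical
  have hN : (0:ℝ) < (Fintype.card X : ℝ) := by
    exact_mod_cast Fintype.card_pos
  set N := (Fintype.card X : ℝ) with hNdef
  have hE : ESum A / N ^ 2 ≤ ε ^ 2 := by rw [div_eq_mul_inv, mul_comm]; rwa [one_div] at h
  have hE0 : 0 ≤ ESum A := by
    refine Finset.sum_nonneg fun _ _ => Finset.sum_nonneg fun _ _ =>
      Finset.sum_nonneg fun _ _ => Finset.sum_nonneg fun _ _ => sw_tauNormSq_nonneg _
  have claim : ∀ m, 1 ≤ m → Real.sqrt (SkSum A m / N ^ (m + 1)) ≤ m * ε := by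
    intro m hm
    induction m, hm using Nat.le_induction with
    | base =>
        rw [sw_SkSum_one]
        calc Real.sqrt (ESum A / N ^ 2) ≤ Real.sqrt (ε ^ 2) := Real.sqrt_le_sqrt hE
          _ = ε := Real.sqrt_sq hε
          _ = (1:ℕ) * ε := by norm_num
    | succ m hm ih =>
        have hstep := sw_step_lemma A hA m
        have hR : 0 ≤ Real.sqrt (N * SkSum A m) + Real.sqrt (N ^ m * ESum A) := by positivity
        calc Real.sqrt (SkSum A (m+1) / N ^ (m+1+1))
            = Real.sqrt (SkSum A (m+1)) / Real.sqrt (N ^ (m+2)) := by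
              rw [Real.sqrt_div (sw_SkSum_nonneg A (m+1))]
          _ ≤ (Real.sqrt (N * SkSum A m) + Real.sqrt (N ^ m * ESum A))
              / Real.sqrt (N ^ (m+2)) := by
              rw [div_eq_mul_inv, div_eq_mul_inv]
              refine mul_le_mul_of_nonneg_right ?_ (by positivity)
              exact (Real.sqrt_le_sqrt hstep).trans_eq (Real.sqrt_sq hR)
          _ = Real.sqrt (N * SkSum A m / N ^ (m+2))
              + Real.sqrt (N ^ m * ESum A / N ^ (m+2)) := by
              rw [Real.sqrt_div (mul_nonneg hN.le (sw_SkSum_nonneg A m)),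
                Real.sqrt_div (mul_nonneg (pow_nonneg hN.le m) hE0), add_div]
          _ = Real.sqrt (SkSum A m / N ^ (m+1)) + Real.sqrt (ESum A / N ^ 2) := by
              congr 2
              · field_simp
                ring
              · field_simp
                ring
          _ ≤ m * ε + ε := by
              refine add_le_add ih ?_
              calc Real.sqrt (ESum A / N ^ 2) ≤ Real.sqrt (ε ^ 2) := Real.sqrt_le_sqrt hE
                _ = ε := Real.sqrt_sq hε
          _ = (↑(m+1)) * ε := by push_cast; ring
  have c := claim k hk
  have h0 : 0 ≤ SkSum A k / N ^ (k+1) := div_nonneg (sw_SkSum_nonneg A k) (by positivity)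
  have := pow_le_pow_left₀ (Real.sqrt_nonneg _) c 2
  rw [Real.sq_sqrt h0] at this
  calc (1 / N ^ (k+1)) * SkSum A k = SkSum A k / N ^ (k+1) := by ring
    _ ≤ ((k:ℝ) * ε) ^ 2 := this

end SwitcherooAux

/-- Propagation of approximate commutativity to products (Proposition 2.13):
if the submeasurements `A^x` pairwise approximately commute on average,
`E_{x,y} Σ_{a,b} ‖A^x_a A^y_b − A^y_b A^x_a‖_τ² ≤ ε²`, then for every `k ≥ 1`,
commuting a single element past the length-`k` product
`P^s_ā = A^{s₁}_{a₁} ⋯ A^{s_k}_{a_k}` incurs error at most `(kε)²`: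
`E_{s ∼ X^k, x ∼ X} Σ_{ā,b} ‖P^s_ā A^x_b − A^x_b P^s_ā‖_τ² ≤ (kε)²`. -/
theorem switcheroo {n : ℕ} {X α : Type*}
    [Fintype X] [Fintype α] [Nonempty X]
    (A : X → α → Matrix (Fin n) (Fin n) ℂ)
    (hA : ∀ x, IsSubmeasurement (A x))
    (ε : ℝ) (hε : 0 ≤ ε)
    (h : (1 / ((Fintype.card X : ℝ)) ^ 2) *
        ∑ x, ∑ y, ∑ a, ∑ b, tauNormSq (A x a * A y b - A y b * A x a) ≤ ε ^ 2)
    (k : ℕ) (hk : 1 ≤ k) :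
    (1 / ((Fintype.card X : ℝ)) ^ (k + 1)) *
        ∑ s : Fin k → X, ∑ x, ∑ a : Fin k → α, ∑ b,
          tauNormSq ((List.ofFn fun i => A (s i) (a i)).prod * A x b -
            A x b * (List.ofFn fun i => A (s i) (a i)).prod) ≤ (k * ε) ^ 2 := by
  classical
  exact switcheroo_aux A hA ε hε h k hk
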